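/- For positive reals a, b with s·a ≤ b ≤ t·a for some 1 ≤ s ≤ t, and v ∈ [0,1]: f_v(s)·a^(1-v)·b^v ≤ (1-v)a + vb ≤ f_v(t)·a^(1-v)·b^v, where f_v(x) = ((1-v)+vx)/x^v. -/

import Mathlib

open Real

private lemma key_mono (v s x : ℝ) (hv0 : 0 ≤ v) (hv1 : v ≤ 1)
    (hs : 1 ≤ s) (hsx : s ≤ x) :
    ((1 - v) + v * s) / s ^ v ≤ ((1 - v) + v * x) / x ^ v := by
  have hs0 : (0:ℝ) < s := lt_of_lt_of_le one_pos hs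
  have hx0 : (0:ℝ) < x := lt_of_lt_of_le hs0 hsx
  rw [div_le_div_iff₀ (Real.rpow_pos_of_pos hs0 v) (Real.rpow_pos_of_pos hx0 v)]
  -- Bernoulli: (x/s)^v ≤ 1 + v*(x/s - 1)
  have hber : (x / s) ^ v ≤ 1 + v * (x / s - 1) := by
    have := rpow_one_add_le_one_add_mul_self (s := x / s - 1)
      (by nlinarith [div_pos hx0 hs0]) hv0 hv1
    simpa using this
  have hxv : x ^ v ≤ (1 + v * (x / s - 1)) * s ^ v := by
    have : x ^ v = (x / s) ^ v * s ^ v := by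
      rw [Real.div_rpow hx0.le hs0.le, div_mul_cancel₀]
      exact (Real.rpow_pos_of_pos hs0 v).ne'
    rw [this]
    exact mul_le_mul_of_nonneg_right hber (Real.rpow_pos_of_pos hs0 v).le
  have hpos : 0 < (1 - v) + v * s := by nlinarith
  calc ((1 - v) + v * s) * x ^ v
      ≤ ((1 - v) + v * s) * ((1 + v * (x / s - 1)) * s ^ v) :=
        mul_le_mul_of_nonneg_left hxv hpos.le
    _ ≤ ((1 - v) + v * x) * s ^ v := by
        rw [← mul_assoc]
        apply mul_le_mul_of_nonneg_right _ (Real.rpow_pos_of_pos hs0 v).le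
        have key : s * (((1 - v) + v * s) * (1 + v * (x / s - 1))) ≤
            s * ((1 - v) + v * x) := by
          have hid : s * ((1 - v) + v * x) -
              s * (((1 - v) + v * s) * (1 + v * (x / s - 1))) =
              v * (1 - v) * (s - 1) * (x - s) := by
            field_simp
            ring
          nlinarith [mul_nonneg (mul_nonneg (mul_nonneg hv0 (by linarith : (0:ℝ) ≤ 1 - v)) (by linarith : (0:ℝ) ≤ s - 1)) (by linarith : (0:ℝ) ≤ x - s)]
        exact le_of_mul_le_mul_left key hs0

theorem stmt_13 (a b s t v : ℝ) (ha : 0 < a) (hb : 0 < b)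
    (hs : 1 ≤ s) (hst : s ≤ t)
    (hsa : s * a ≤ b) (hbt : b ≤ t * a) (hv0 : 0 ≤ v) (hv1 : v ≤ 1) :
    ((1 - v) + v * s) / s ^ v * (a ^ (1 - v) * b ^ v) ≤ (1 - v) * a + v * b ∧
    (1 - v) * a + v * b ≤ ((1 - v) + v * t) / t ^ v * (a ^ (1 - v) * b ^ v) := by
  set x := b / a with hx
  have hx0 : 0 < x := div_pos hb ha
  have hsx : s ≤ x := (le_div_iff₀ ha).mpr hsa
  have hxt : x ≤ t := (div_le_iff₀ ha).mpr (by linarith [hbt])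
  have hb' : b = a * x := by rw [hx]; field_simp [ha.ne']
  have habv : a ^ (1 - v) * b ^ v = a * x ^ v := by
    rw [hb', Real.mul_rpow ha.le hx0.le, ← mul_assoc, ← Real.rpow_add ha,
      sub_add_cancel, Real.rpow_one]
  have hsum : (1 - v) * a + v * b = a * ((1 - v) + v * x) := by
    rw [hb']; ring
  have h1 := key_mono v s x hv0 hv1 hs hsx
  have h2 := key_mono v x t hv0 hv1 (le_trans hs hsx) hxt
  have hxv := Real.rpow_pos_of_pos hx0 v
  constructor
  · rw [habv, hsum]
    have h1' : ((1 - v) + v * s) / s ^ v * x ^ v ≤ ((1 - v) + v * x) := by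
      calc ((1 - v) + v * s) / s ^ v * x ^ v ≤ ((1 - v) + v * x) / x ^ v * x ^ v :=
            mul_le_mul_of_nonneg_right h1 hxv.le
        _ = (1 - v) + v * x := by field_simp
    calc ((1 - v) + v * s) / s ^ v * (a * x ^ v)
        = a * (((1 - v) + v * s) / s ^ v * x ^ v) := by ring
      _ ≤ a * ((1 - v) + v * x) := mul_le_mul_of_nonneg_left h1' ha.le
  · rw [habv, hsum]
    have h2' : ((1 - v) + v * x) ≤ ((1 - v) + v * t) / t ^ v * x ^ v := by
      calc (1 - v) + v * x = ((1 - v) + v * x) / x ^ v * x ^ v := by field_simp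
        _ ≤ ((1 - v) + v * t) / t ^ v * x ^ v :=
            mul_le_mul_of_nonneg_right h2 hxv.le
    calc a * ((1 - v) + v * x) ≤ a * (((1 - v) + v * t) / t ^ v * x ^ v) :=
          mul_le_mul_of_nonneg_left h2' ha.le
      _ = ((1 - v) + v * t) / t ^ v * (a * x ^ v) := by ring
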